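/- Let μ be a Borel probability measure on ℝ^N with finite second moment whose support has at least k points, and suppose μ_m → μ in the 2-Wasserstein distance. Then min_z F_{μ_m,k}(z) → min_z F_{μ,k}(z) as m → ∞. -/
import Mathlib

open MeasureTheory Filter

/-- The 2-Wasserstein distance between two Borel probability measures on `ℝ^N`. -/
noncomputable def wasserstein2 {N : ℕ} (μ ν : Measure (EuclideanSpace ℝ (Fin N))) : ℝ :=
  sInf { r : ℝ | ∃ π : Measure (EuclideanSpace ℝ (Fin N) × EuclideanSpace ℝ (Fin N)),
      π.fst = μ ∧ π.snd = ν ∧ r = Real.sqrt (∫ p, dist p.1 p.2 ^ 2 ∂π) }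

/-- The k-means functional `F_{μ,k}(z) = ∫ min_i |x - z_i|² dμ(x)`. -/
noncomputable def kmeansF {N k : ℕ} (μ : Measure (EuclideanSpace ℝ (Fin N)))
    (z : Fin k → EuclideanSpace ℝ (Fin N)) : ℝ :=
  ∫ x, (⨅ i, dist x (z i)) ^ 2 ∂μ

/-- The support of a Borel measure: points all of whose neighborhoods have positive measure. -/
def measSupport {N : ℕ} (μ : Measure (EuclideanSpace ℝ (Fin N))) :
    Set (EuclideanSpace ℝ (Fin N)) :=
  {x | ∀ ε > 0, 0 < μ (Metric.ball x ε)}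

section Aux

variable {N k : ℕ}

local notation "E" => EuclideanSpace ℝ (Fin N)

lemma minDist_nonneg (z : Fin k → E) (x : E) : 0 ≤ ⨅ i, dist x (z i) :=
  Real.iInf_nonneg fun _ => dist_nonneg

lemma minDist_bddBelow (z : Fin k → E) (x : E) :
    BddBelow (Set.range fun i => dist x (z i)) :=
  ⟨0, fun r hr => by obtain ⟨i, rfl⟩ := hr; exact dist_nonneg⟩

lemma minDist_le_add (hk : 0 < k) (z : Fin k → E) (x y : E) :
    (⨅ i, dist x (z i)) ≤ (⨅ i, dist y (z i)) + dist x y := by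
  have : Nonempty (Fin k) := ⟨⟨0, hk⟩⟩
  rw [← sub_le_iff_le_add]
  apply le_ciInf
  intro i
  have h1 : (⨅ j, dist x (z j)) ≤ dist x (z i) := ciInf_le (minDist_bddBelow z x) i
  have h2 := dist_triangle x y (z i)
  linarith

lemma minDist_lip (hk : 0 < k) (z : Fin k → E) :
    LipschitzWith 1 (fun x => ⨅ i, dist x (z i)) := by
  apply LipschitzWith.of_dist_le_mul
  intro x y
  rw [NNReal.coe_one, one_mul, Real.dist_eq, abs_sub_le_iff]
  constructor
  · have := minDist_le_add hk z x y
    linarith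
  · have := minDist_le_add hk z y x
    rw [dist_comm y x] at this
    linarith

lemma norm_integrable (μ : Measure E) [IsProbabilityMeasure μ]
    (h2 : Integrable (fun x => ‖x‖ ^ 2) μ) : Integrable (fun x => ‖x‖) μ := by
  refine ((integrable_const 1).add h2).mono' continuous_norm.aestronglyMeasurable ?_
  filter_upwards with x
  have h := norm_nonneg x
  rw [Real.norm_eq_abs, abs_of_nonneg h]
  simp only [Pi.add_apply]
  nlinarith

lemma minDist_sq_integrable (hk : 0 < k) (μ : Measure E) [IsProbabilityMeasure μ]
    (h2 : Integrable (fun x => ‖x‖ ^ 2) μ) (z : Fin k → E) :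
    Integrable (fun x => (⨅ i, dist x (z i)) ^ 2) μ := by
  set c := ‖z ⟨0, hk⟩‖ with hc
  have hg : Integrable (fun x => (‖x‖ + c) ^ 2) μ := by
    have heq : (fun x : E => (‖x‖ + c) ^ 2)
        = fun x => ‖x‖ ^ 2 + ((2 * c) * ‖x‖ + c ^ 2) := by
      funext x; ring
    rw [heq]
    exact h2.add (((norm_integrable μ h2).const_mul (2 * c)).add (integrable_const _))
  refine hg.mono' ?_ ?_
  · exact (((minDist_lip hk z).continuous).pow 2).aestronglyMeasurable
  · filter_upwards with x
    have h0 := minDist_nonneg z x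
    have h1 : (⨅ i, dist x (z i)) ≤ ‖x‖ + c := by
      refine le_trans (ciInf_le (minDist_bddBelow z x) ⟨0, hk⟩) ?_
      calc dist x (z ⟨0, hk⟩) ≤ dist x 0 + dist 0 (z ⟨0, hk⟩) := dist_triangle _ _ _
      _ = ‖x‖ + c := by rw [dist_zero_right, dist_comm, dist_zero_right]
    rw [Real.norm_eq_abs, abs_of_nonneg (by positivity)]
    have hxc : (0:ℝ) ≤ ‖x‖ + c := le_trans h0 h1
    nlinarith

/-- expressing `√(kmeansF μ z)` via a lintegral -/
lemma sqrt_kmeansF_eq (hk : 0 < k) (μ : Measure E) (z : Fin k → E) :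
    Real.sqrt (kmeansF μ z)
      = ((∫⁻ x, ENNReal.ofReal (⨅ i, dist x (z i)) ^ (2:ℝ) ∂μ) ^ (1/2 : ℝ)).toReal := by
  have hmeas : AEStronglyMeasurable (fun x => (⨅ i, dist x (z i)) ^ 2) μ :=
    (((minDist_lip hk z).continuous).pow 2).aestronglyMeasurable
  have hnn : 0 ≤ᵐ[μ] fun x => (⨅ i, dist x (z i)) ^ 2 := by
    filter_upwards with x; positivity
  rw [kmeansF, integral_eq_lintegral_of_nonneg_ae hnn hmeas]
  rw [Real.sqrt_eq_rpow, ENNReal.toReal_rpow]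
  congr 2
  apply lintegral_congr
  intro x
  rw [ENNReal.ofReal_pow (minDist_nonneg z x)]
  rw [← ENNReal.rpow_natCast (ENNReal.ofReal (⨅ i, dist x (z i))) 2]
  norm_num

lemma lintegral_minDist_sq_lt_top (hk : 0 < k) (μ : Measure E) [IsProbabilityMeasure μ]
    (h2 : Integrable (fun x => ‖x‖ ^ 2) μ) (z : Fin k → E) :
    (∫⁻ x, ENNReal.ofReal (⨅ i, dist x (z i)) ^ (2:ℝ) ∂μ) < ⊤ := by
  have h := (minDist_sq_integrable hk μ h2 z).lintegral_lt_top
  refine lt_of_le_of_lt (le_of_eq ?_) h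
  apply lintegral_congr
  intro x
  rw [ENNReal.ofReal_pow (minDist_nonneg z x)]
  rw [← ENNReal.rpow_natCast (ENNReal.ofReal (⨅ i, dist x (z i))) 2]
  norm_num

/-- the key coupling inequality -/
lemma sqrt_kmeansF_coupling (hk : 0 < k)
    (μ₁ μ₂ : Measure E) [IsProbabilityMeasure μ₁] [IsProbabilityMeasure μ₂]
    (h1 : Integrable (fun x => ‖x‖ ^ 2) μ₁) (h2 : Integrable (fun x => ‖x‖ ^ 2) μ₂)
    (π : Measure (E × E)) (hfst : π.fst = μ₁) (hsnd : π.snd = μ₂)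
    (z : Fin k → E) :
    Real.sqrt (kmeansF μ₁ z) ≤ Real.sqrt (kmeansF μ₂ z)
      + Real.sqrt (∫ p, dist p.1 p.2 ^ 2 ∂π) := by
  set f : E → ℝ := fun x => ⨅ i, dist x (z i) with hf
  have hfc : Continuous f := (minDist_lip hk z).continuous
  have hfm : Measurable fun x => ENNReal.ofReal (f x) ^ (2:ℝ) :=
    (ENNReal.measurable_ofReal.comp hfc.measurable).pow_const _
  -- distance squared is integrable w.r.t. π
  have hdistc : Continuous fun p : E × E => dist p.1 p.2 := continuous_fst.dist continuous_snd
  have hI1 : Integrable (fun p : E × E => ‖p.1‖ ^ 2) π := by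
    rw [← hfst] at h1
    exact (integrable_map_measure h1.aestronglyMeasurable
      measurable_fst.aemeasurable).1 h1
  have hI2 : Integrable (fun p : E × E => ‖p.2‖ ^ 2) π := by
    rw [← hsnd] at h2
    exact (integrable_map_measure h2.aestronglyMeasurable
      measurable_snd.aemeasurable).1 h2
  have hD : Integrable (fun p : E × E => dist p.1 p.2 ^ 2) π := by
    refine ((hI1.const_mul 2).add (hI2.const_mul 2)).mono'
      ((hdistc.pow 2).aestronglyMeasurable) ?_
    filter_upwards with p
    have h0 : dist p.1 p.2 ≤ ‖p.1‖ + ‖p.2‖ := by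
      calc dist p.1 p.2 ≤ dist p.1 0 + dist 0 p.2 := dist_triangle _ _ _
      _ = ‖p.1‖ + ‖p.2‖ := by rw [dist_zero_right, dist_comm, dist_zero_right]
    rw [Real.norm_eq_abs, abs_of_nonneg (by positivity)]
    simp only [Pi.add_apply]
    have h1 : dist p.1 p.2 ^ 2 ≤ (‖p.1‖ + ‖p.2‖) ^ 2 := pow_le_pow_left₀ dist_nonneg h0 2
    nlinarith [sq_nonneg (‖p.1‖ - ‖p.2‖)]
  -- rewrite sqrt of dist integral
  have hDnn : 0 ≤ᵐ[π] fun p : E × E => dist p.1 p.2 ^ 2 := by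
    filter_upwards with p; positivity
  have hDeq : Real.sqrt (∫ p, dist p.1 p.2 ^ 2 ∂π)
      = ((∫⁻ p, ENNReal.ofReal (dist p.1 p.2) ^ (2:ℝ) ∂π) ^ (1/2 : ℝ)).toReal := by
    rw [integral_eq_lintegral_of_nonneg_ae hDnn ((hdistc.pow 2).aestronglyMeasurable)]
    rw [Real.sqrt_eq_rpow, ENNReal.toReal_rpow]
    congr 2
    apply lintegral_congr
    intro p
    rw [ENNReal.ofReal_pow dist_nonneg]
    rw [← ENNReal.rpow_natCast (ENNReal.ofReal (dist p.1 p.2)) 2]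
    norm_num
  rw [sqrt_kmeansF_eq hk μ₁ z, sqrt_kmeansF_eq hk μ₂ z, hDeq]
  -- marginal identities
  have hmarg1 : (∫⁻ x, ENNReal.ofReal (f x) ^ (2:ℝ) ∂μ₁)
      = ∫⁻ p : E × E, ENNReal.ofReal (f p.1) ^ (2:ℝ) ∂π := by
    rw [← hfst, Measure.fst, lintegral_map hfm measurable_fst]
  have hmarg2 : (∫⁻ x, ENNReal.ofReal (f x) ^ (2:ℝ) ∂μ₂)
      = ∫⁻ p : E × E, ENNReal.ofReal (f p.2) ^ (2:ℝ) ∂π := by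
    rw [← hsnd, Measure.snd, lintegral_map hfm measurable_snd]
  -- Minkowski
  set g₁ : E × E → ENNReal := fun p => ENNReal.ofReal (f p.2) with hg₁
  set g₂ : E × E → ENNReal := fun p => ENNReal.ofReal (dist p.1 p.2) with hg₂
  have hpt : ∀ p : E × E, ENNReal.ofReal (f p.1) ≤ (g₁ + g₂) p := by
    intro p
    have h := minDist_le_add hk z p.1 p.2
    calc ENNReal.ofReal (f p.1) ≤ ENNReal.ofReal (f p.2 + dist p.1 p.2) :=
          ENNReal.ofReal_le_ofReal h
    _ = g₁ p + g₂ p := ENNReal.ofReal_add (minDist_nonneg z p.2) dist_nonneg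
    _ = (g₁ + g₂) p := rfl
  have hmink : (∫⁻ p, (g₁ + g₂) p ^ (2:ℝ) ∂π) ^ (1/(2:ℝ))
      ≤ (∫⁻ p, g₁ p ^ (2:ℝ) ∂π) ^ (1/(2:ℝ)) + (∫⁻ p, g₂ p ^ (2:ℝ) ∂π) ^ (1/(2:ℝ)) :=
    ENNReal.lintegral_Lp_add_le
      ((ENNReal.measurable_ofReal.comp (hfc.measurable.comp measurable_snd)).aemeasurable)
      ((ENNReal.measurable_ofReal.comp hdistc.measurable).aemeasurable)
      (by norm_num)
  have hle : (∫⁻ p : E × E, ENNReal.ofReal (f p.1) ^ (2:ℝ) ∂π) ^ (1/(2:ℝ))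
      ≤ (∫⁻ p, g₁ p ^ (2:ℝ) ∂π) ^ (1/(2:ℝ)) + (∫⁻ p, g₂ p ^ (2:ℝ) ∂π) ^ (1/(2:ℝ)) := by
    refine le_trans ?_ hmink
    apply ENNReal.rpow_le_rpow ?_ (by norm_num)
    apply lintegral_mono
    intro p
    exact ENNReal.rpow_le_rpow (hpt p) (by norm_num)
  rw [hmarg1, hmarg2]
  -- finiteness
  have hfin1 : (∫⁻ p, g₁ p ^ (2:ℝ) ∂π) ^ (1/(2:ℝ)) ≠ ⊤ := by
    rw [hg₁]
    have := lintegral_minDist_sq_lt_top hk μ₂ h2 z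
    rw [hmarg2] at this
    exact ENNReal.rpow_ne_top_of_nonneg (by norm_num) this.ne
  have hfin2 : (∫⁻ p, g₂ p ^ (2:ℝ) ∂π) ^ (1/(2:ℝ)) ≠ ⊤ := by
    have hDfin : (∫⁻ p, g₂ p ^ (2:ℝ) ∂π) < ⊤ := by
      refine lt_of_le_of_lt (le_of_eq ?_) hD.lintegral_lt_top
      apply lintegral_congr
      intro p
      rw [ENNReal.ofReal_pow dist_nonneg, hg₂]
      rw [← ENNReal.rpow_natCast (ENNReal.ofReal (dist p.1 p.2)) 2]
      norm_num
    exact ENNReal.rpow_ne_top_of_nonneg (by norm_num) hDfin.ne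
  calc ((∫⁻ p : E × E, ENNReal.ofReal (f p.1) ^ (2:ℝ) ∂π) ^ (1/(2:ℝ))).toReal
      ≤ ((∫⁻ p, g₁ p ^ (2:ℝ) ∂π) ^ (1/(2:ℝ)) + (∫⁻ p, g₂ p ^ (2:ℝ) ∂π) ^ (1/(2:ℝ))).toReal :=
        ENNReal.toReal_mono (ENNReal.add_ne_top.mpr ⟨hfin1, hfin2⟩) hle
  _ = _ := ENNReal.toReal_add hfin1 hfin2

lemma kmeansF_nonneg (μ : Measure E) (z : Fin k → E) : 0 ≤ kmeansF μ z :=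
  integral_nonneg fun x => by positivity

lemma kmeansF_bddBelow (μ : Measure E) :
    BddBelow (Set.range fun z : Fin k → E => kmeansF μ z) :=
  ⟨0, fun r hr => by obtain ⟨z, rfl⟩ := hr; exact kmeansF_nonneg μ z⟩

lemma wasserstein2_nonneg (μ₁ μ₂ : Measure E) : 0 ≤ wasserstein2 μ₁ μ₂ := by
  apply Real.sInf_nonneg
  rintro r ⟨π, -, -, rfl⟩
  exact Real.sqrt_nonneg _

/-- `√(min F)` is 1-Lipschitz w.r.t. W₂ (one-sided version). -/
lemma sqrt_iInf_kmeansF_le (hk : 0 < k)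
    (μ₁ μ₂ : Measure E) [IsProbabilityMeasure μ₁] [IsProbabilityMeasure μ₂]
    (h1 : Integrable (fun x => ‖x‖ ^ 2) μ₁) (h2 : Integrable (fun x => ‖x‖ ^ 2) μ₂) :
    Real.sqrt (⨅ z : Fin k → E, kmeansF μ₁ z)
      ≤ Real.sqrt (⨅ z : Fin k → E, kmeansF μ₂ z) + wasserstein2 μ₁ μ₂ := by
  have hW : ∀ z : Fin k → E,
      Real.sqrt (kmeansF μ₁ z) ≤ Real.sqrt (kmeansF μ₂ z) + wasserstein2 μ₁ μ₂ := by
    intro z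
    rw [← sub_le_iff_le_add']
    apply le_csInf
    · exact ⟨Real.sqrt (∫ p, dist p.1 p.2 ^ 2 ∂(μ₁.prod μ₂)), μ₁.prod μ₂,
        Measure.fst_prod, Measure.snd_prod, rfl⟩
    · rintro r ⟨π, hfst, hsnd, rfl⟩
      have := sqrt_kmeansF_coupling hk μ₁ μ₂ h1 h2 π hfst hsnd z
      linarith
  set W := wasserstein2 μ₁ μ₂ with hWdef
  set t := Real.sqrt (⨅ z : Fin k → E, kmeansF μ₁ z) - W with ht
  rw [← sub_le_iff_le_add]
  rcases le_or_gt t 0 with h | h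
  · exact le_trans h (Real.sqrt_nonneg _)
  · have hts : ∀ z : Fin k → E, t ^ 2 ≤ kmeansF μ₂ z := by
      intro z
      have h1' : Real.sqrt (⨅ z : Fin k → E, kmeansF μ₁ z) ≤ Real.sqrt (kmeansF μ₁ z) :=
        Real.sqrt_le_sqrt (ciInf_le (kmeansF_bddBelow μ₁) z)
      have h2' : t ≤ Real.sqrt (kmeansF μ₂ z) := by
        have := hW z; rw [ht]; linarith
      calc t ^ 2 ≤ Real.sqrt (kmeansF μ₂ z) ^ 2 := by nlinarith [Real.sqrt_nonneg (kmeansF μ₂ z)]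
      _ = kmeansF μ₂ z := Real.sq_sqrt (kmeansF_nonneg μ₂ z)
    have : t ^ 2 ≤ ⨅ z : Fin k → E, kmeansF μ₂ z := le_ciInf hts
    calc t = Real.sqrt (t ^ 2) := (Real.sqrt_sq h.le).symm
    _ ≤ _ := Real.sqrt_le_sqrt this

end Aux

/-- If `μ_m → μ` in the 2-Wasserstein distance and the support of `μ` has at least `k` points,
then the minimal k-means values converge: `min_z F_{μ_m,k}(z) → min_z F_{μ,k}(z)`. -/
theorem kmeans_min_value_stability (N k : ℕ) (hk : 0 < k)
    (μ : Measure (EuclideanSpace ℝ (Fin N))) [IsProbabilityMeasure μ]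
    (h2 : Integrable (fun x => ‖x‖ ^ 2) μ)
    (hsupp : (k : ℕ∞) ≤ (measSupport μ).encard)
    (μs : ℕ → Measure (EuclideanSpace ℝ (Fin N)))
    (hprob : ∀ m, IsProbabilityMeasure (μs m))
    (h2s : ∀ m, Integrable (fun x => ‖x‖ ^ 2) (μs m))
    (hconv : Tendsto (fun m => wasserstein2 (μs m) μ) atTop (nhds 0)) :
    Tendsto (fun m => ⨅ z : Fin k → EuclideanSpace ℝ (Fin N), kmeansF (μs m) z)
      atTop (nhds (⨅ z : Fin k → EuclideanSpace ℝ (Fin N), kmeansF μ z)) := by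
  set E := EuclideanSpace ℝ (Fin N)
  set A : ℝ := ⨅ z : Fin k → E, kmeansF μ z with hA
  set Am : ℕ → ℝ := fun m => ⨅ z : Fin k → E, kmeansF (μs m) z with hAm
  have hAnn : 0 ≤ A := Real.iInf_nonneg fun z => kmeansF_nonneg μ z
  have hAmnn : ∀ m, 0 ≤ Am m := fun m => Real.iInf_nonneg fun z => kmeansF_nonneg (μs m) z
  -- symmetric Wasserstein bound via coupling swap? Use the inequality in both directions.
  have hWsymm : ∀ m, wasserstein2 μ (μs m) ≤ wasserstein2 (μs m) μ := by
    intro m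
    apply le_csInf
    · exact ⟨Real.sqrt (∫ p, dist p.1 p.2 ^ 2 ∂((μs m).prod μ)),
        (μs m).prod μ, Measure.fst_prod, Measure.snd_prod, rfl⟩
    · rintro r ⟨π, hfst, hsnd, rfl⟩
      have hswap : (π.map Prod.swap).fst = μ ∧ (π.map Prod.swap).snd = μs m := by
        constructor
        · rw [Measure.fst, Measure.map_map measurable_fst measurable_swap]
          exact hsnd
        · rw [Measure.snd, Measure.map_map measurable_snd measurable_swap]
          exact hfst
      have hint : (∫ p, dist p.1 p.2 ^ 2 ∂(π.map Prod.swap)) = ∫ p, dist p.1 p.2 ^ 2 ∂π := by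
        rw [integral_map measurable_swap.aemeasurable]
        · simp only [Prod.fst_swap, Prod.snd_swap, Prod.swap]
          apply integral_congr_ae
          filter_upwards with p
          rw [dist_comm]
        · exact ((continuous_fst.dist continuous_snd).pow 2).aestronglyMeasurable
      apply csInf_le
      · exact ⟨0, fun r ⟨π', _, _, hr⟩ => hr ▸ Real.sqrt_nonneg _⟩
      · exact ⟨π.map Prod.swap, hswap.1, hswap.2, by rw [hint]⟩
  have key : ∀ m, dist (Real.sqrt (Am m)) (Real.sqrt A) ≤ wasserstein2 (μs m) μ := by
    intro m
    have := hprob m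
    have hle1 : Real.sqrt (Am m) ≤ Real.sqrt A + wasserstein2 (μs m) μ :=
      sqrt_iInf_kmeansF_le hk (μs m) μ (h2s m) h2
    have hle2 : Real.sqrt A ≤ Real.sqrt (Am m) + wasserstein2 μ (μs m) :=
      sqrt_iInf_kmeansF_le hk μ (μs m) h2 (h2s m)
    have hle2' : Real.sqrt A ≤ Real.sqrt (Am m) + wasserstein2 (μs m) μ :=
      le_trans hle2 (by linarith [hWsymm m])
    rw [Real.dist_eq, abs_sub_le_iff]
    constructor <;> linarith
  have hsq : Tendsto (fun m => Real.sqrt (Am m)) atTop (nhds (Real.sqrt A)) := by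
    rw [tendsto_iff_dist_tendsto_zero]
    exact squeeze_zero (fun m => dist_nonneg) key hconv
  have := hsq.pow 2
  rw [Real.sq_sqrt hAnn] at this
  refine this.congr fun m => ?_
  rw [Real.sq_sqrt (hAmnn m)]
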